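/- Let $G$ be a group acting on an algebra $B$ over $\ell$, and let $S$ be a $G$-set. Let $M_S B$ denote the algebra of finitely supported $S\times S$ matrices over $B$, with $G$-action $g\cdot(e_{s,t}\otimes b) = e_{gs,gt}\otimes g\cdot b$. Then the map $R_{S,B}: (M_S B) \rtimes G \to M_{|S|}(B \rtimes G)$ defined by $R_{S,B}((e_{s,t}\otimes b)\rtimes g) = e_{s, g^{-1}t} \otimes (b \rtimes g)$ is an isomorphism of algebras (where $M_{|S|}$ denotes matrices indexed by the underlying set of $S$). -/

import Mathlib

/-!
Statement 2: for a `G`-algebra `B` and a `G`-set `S`, the map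
`R_{S,B} : (M_S B) ⋊ G → M_{|S|}(B ⋊ G)`,
`(e_{s,t} ⊗ b) ⋊ g ↦ e_{s,g⁻¹t} ⊗ (b ⋊ g)`, is an isomorphism of algebras.

`M_S B` is modeled as finitely supported matrices `(S × S) →₀ B`, crossed
products as `G →₀ -` with twisted convolution.
-/

/-- Crossed product multiplication on `⊕_{g ∈ G} A`. -/
noncomputable def crossedMul {G : Type} [Group G] {A : Type} [AddCommMonoid A]
    (mulA : A → A → A) (act : G → A → A) (a b : G →₀ A) : G →₀ A :=
  a.sum fun g x => b.sum fun g' y => Finsupp.single (g * g') (mulA x (act g y))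

/-- Matrix multiplication on finitely supported `S × S` matrices with entries
in `R`, for a given multiplication `mulR` on entries. -/
noncomputable def matMul {S R : Type} [DecidableEq S] [AddCommMonoid R]
    (mulR : R → R → R) (a b : (S × S) →₀ R) : (S × S) →₀ R :=
  a.sum fun p x => b.sum fun q y =>
    if p.2 = q.1 then Finsupp.single (p.1, q.2) (mulR x y) else 0

/-- The `G`-action on `M_S B`: `g • (e_{s,t} ⊗ b) = e_{gs,gt} ⊗ g•b`. -/
noncomputable def matAct {G S B : Type} [Group G] [MulAction G S]
    [AddCommMonoid B] [DistribMulAction G B] (g : G) (m : (S × S) →₀ B) :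
    (S × S) →₀ B :=
  m.sum fun p x => Finsupp.single (g • p.1, g • p.2) (g • x)

/-- The map `R_{S,B}`: `(e_{s,t} ⊗ b) ⋊ g ↦ e_{s,g⁻¹t} ⊗ (b ⋊ g)`. -/
noncomputable def Rmap {G S B : Type} [Group G] [MulAction G S] [AddCommMonoid B]
    (x : G →₀ ((S × S) →₀ B)) : (S × S) →₀ (G →₀ B) :=
  x.sum fun g m => m.sum fun p b =>
    Finsupp.single (p.1, g⁻¹ • p.2) (Finsupp.single g b)

section AuxLemmas

/-- Additive maps out of doubly-nested finsupps are determined by values on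
double singles. -/
theorem ext_dsingle {ι κ M N : Type} [AddCommMonoid M] [AddCommMonoid N]
    (f1 f2 : (ι →₀ (κ →₀ M)) → N)
    (h1z : f1 0 = 0) (h2z : f2 0 = 0)
    (h1a : ∀ x y, f1 (x + y) = f1 x + f1 y) (h2a : ∀ x y, f2 (x + y) = f2 x + f2 y)
    (hs : ∀ i k m, f1 (Finsupp.single i (Finsupp.single k m)) =
        f2 (Finsupp.single i (Finsupp.single k m))) :
    ∀ x, f1 x = f2 x := by
  intro x
  induction x using Finsupp.induction with
  | zero => rw [h1z, h2z]
  | single_add i m x _ _ ih =>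
    rw [h1a, h2a, ih]
    congr 1
    induction m using Finsupp.induction with
    | zero => simpa using h1z.trans h2z.symm
    | single_add k b m' _ _ ih2 =>
      rw [Finsupp.single_add, h1a, h2a, hs]
      by_cases h : m' = 0
      · subst h; simp [h1z, h2z]
      · rw [ih2 h]

section matlemmas

variable {S R : Type} [DecidableEq S] [AddCommMonoid R] (mulR : R → R → R)

theorem matMul_zero_left (b : (S × S) →₀ R) : matMul mulR 0 b = 0 := by
  simp [matMul]

theorem matMul_zero_right (a : (S × S) →₀ R) : matMul mulR a 0 = 0 := by
  simp [matMul]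

theorem matMul_add_left (h0 : ∀ y, mulR 0 y = 0)
    (hadd : ∀ x x' y, mulR (x + x') y = mulR x y + mulR x' y)
    (a a' b : (S × S) →₀ R) :
    matMul mulR (a + a') b = matMul mulR a b + matMul mulR a' b := by
  unfold matMul
  refine Finsupp.sum_add_index' (fun p => ?_) (fun p x x' => ?_)
  · simp [h0]
  · rw [← Finsupp.sum_add]
    refine Finsupp.sum_congr fun q _ => ?_
    split <;> simp [hadd, Finsupp.single_add]

theorem matMul_add_right (h0 : ∀ x, mulR x 0 = 0)
    (hadd : ∀ x y y', mulR x (y + y') = mulR x y + mulR x y')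
    (a b b' : (S × S) →₀ R) :
    matMul mulR a (b + b') = matMul mulR a b + matMul mulR a b' := by
  unfold matMul
  rw [← Finsupp.sum_add]
  refine Finsupp.sum_congr fun p _ => ?_
  refine Finsupp.sum_add_index' (fun q => ?_) (fun q y y' => ?_)
  · simp [h0]
  · split <;> simp [hadd, Finsupp.single_add]

theorem matMul_single_single (h0 : ∀ y, mulR 0 y = 0) (h0' : ∀ x, mulR x 0 = 0)
    (s t s' t' : S) (x y : R) :
    matMul mulR (Finsupp.single (s, t) x) (Finsupp.single (s', t') y) =
      if t = s' then Finsupp.single (s, t') (mulR x y) else 0 := by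
  unfold matMul
  rw [Finsupp.sum_single_index, Finsupp.sum_single_index]
  · simp [h0']
  · simp [h0]

end matlemmas

section cmlemmas

variable {G A : Type} [Group G] [AddCommMonoid A] (mulA : A → A → A) (act : G → A → A)

theorem crossedMul_zero_left (b : G →₀ A) : crossedMul mulA act 0 b = 0 := by
  simp [crossedMul]

theorem crossedMul_zero_right (a : G →₀ A) : crossedMul mulA act a 0 = 0 := by
  simp [crossedMul]

theorem crossedMul_add_left (h0 : ∀ y, mulA 0 y = 0)
    (hadd : ∀ x x' y, mulA (x + x') y = mulA x y + mulA x' y)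
    (a a' b : G →₀ A) :
    crossedMul mulA act (a + a') b = crossedMul mulA act a b + crossedMul mulA act a' b := by
  unfold crossedMul
  refine Finsupp.sum_add_index' (fun g => ?_) (fun g x x' => ?_)
  · simp [h0]
  · rw [← Finsupp.sum_add]
    exact Finsupp.sum_congr fun g' _ => by simp [hadd, Finsupp.single_add]

theorem crossedMul_add_right (h0 : ∀ x, mulA x 0 = 0) (ha0 : ∀ g, act g 0 = 0)
    (hadd : ∀ x y y', mulA x (y + y') = mulA x y + mulA x y')
    (haadd : ∀ g y y', act g (y + y') = act g y + act g y')
    (a b b' : G →₀ A) :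
    crossedMul mulA act a (b + b') = crossedMul mulA act a b + crossedMul mulA act a b' := by
  unfold crossedMul
  rw [← Finsupp.sum_add]
  refine Finsupp.sum_congr fun g _ => ?_
  refine Finsupp.sum_add_index' (fun g' => ?_) (fun g' y y' => ?_)
  · simp [ha0, h0]
  · simp [haadd, hadd, Finsupp.single_add]

theorem crossedMul_single_single (h0 : ∀ y, mulA 0 y = 0) (h0' : ∀ x, mulA x 0 = 0)
    (ha0 : ∀ g, act g 0 = 0) (g g' : G) (x y : A) :
    crossedMul mulA act (Finsupp.single g x) (Finsupp.single g' y) =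
      Finsupp.single (g * g') (mulA x (act g y)) := by
  unfold crossedMul
  rw [Finsupp.sum_single_index, Finsupp.sum_single_index]
  · simp [ha0, h0']
  · simp [h0]

end cmlemmas

section actRmap

variable {G S B : Type} [Group G] [MulAction G S] [AddCommMonoid B] [DistribMulAction G B]

theorem matAct_zero (g : G) : matAct (S := S) (B := B) g 0 = 0 := by simp [matAct]

theorem matAct_add (g : G) (m m' : (S × S) →₀ B) :
    matAct g (m + m') = matAct g m + matAct g m' := by
  unfold matAct
  exact Finsupp.sum_add_index' (fun p => by simp) (fun p x x' => by
    simp [smul_add, Finsupp.single_add])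

theorem matAct_single (g : G) (s t : S) (x : B) :
    matAct g (Finsupp.single (s, t) x) = Finsupp.single (g • s, g • t) (g • x) := by
  unfold matAct
  rw [Finsupp.sum_single_index]
  simp

omit [DistribMulAction G B] in
theorem Rmap_zero : Rmap (G := G) (S := S) (B := B) 0 = 0 := by simp [Rmap]

omit [DistribMulAction G B] in
theorem Rmap_add (a b : G →₀ ((S × S) →₀ B)) : Rmap (a + b) = Rmap a + Rmap b := by
  unfold Rmap
  refine Finsupp.sum_add_index' (fun g => ?_) (fun g m m' => ?_)
  · simp
  · exact Finsupp.sum_add_index' (fun p => by simp) (fun p x x' => by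
      simp [Finsupp.single_add])

omit [DistribMulAction G B] in
theorem Rmap_single (g : G) (s t : S) (b : B) :
    Rmap (Finsupp.single g (Finsupp.single (s, t) b)) =
      Finsupp.single (s, g⁻¹ • t) (Finsupp.single g b) := by
  unfold Rmap
  rw [Finsupp.sum_single_index, Finsupp.sum_single_index] <;> simp

omit [DistribMulAction G B] in
theorem Rmap_smul {ℓ : Type} [Semiring ℓ] [Module ℓ B] (c : ℓ)
    (a : G →₀ ((S × S) →₀ B)) : Rmap (c • a) = c • Rmap a := by
  unfold Rmap
  rw [Finsupp.sum_smul_index' (fun g => by simp), Finsupp.smul_sum]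
  refine Finsupp.sum_congr fun g _ => ?_
  rw [Finsupp.sum_smul_index' (fun p => by simp), Finsupp.smul_sum]
  exact Finsupp.sum_congr fun p b => by simp [Finsupp.smul_single]

/-- The inverse of `Rmap`. -/
noncomputable def Lmap {G S B : Type} [Group G] [MulAction G S] [AddCommMonoid B]
    (y : (S × S) →₀ (G →₀ B)) : G →₀ ((S × S) →₀ B) :=
  y.sum fun p f => f.sum fun g b =>
    Finsupp.single g (Finsupp.single (p.1, g • p.2) b)

omit [DistribMulAction G B] in
theorem Lmap_zero : Lmap (G := G) (S := S) (B := B) 0 = 0 := by simp [Lmap]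

omit [DistribMulAction G B] in
theorem Lmap_add (a b : (S × S) →₀ (G →₀ B)) : Lmap (a + b) = Lmap a + Lmap b := by
  unfold Lmap
  refine Finsupp.sum_add_index' (fun p => ?_) (fun p f f' => ?_)
  · simp
  · exact Finsupp.sum_add_index' (fun g => by simp) (fun g x x' => by
      simp [Finsupp.single_add])

omit [DistribMulAction G B] in
theorem Lmap_single (s t : S) (g : G) (b : B) :
    Lmap (Finsupp.single (s, t) (Finsupp.single g b)) =
      Finsupp.single g (Finsupp.single (s, g • t) b) := by
  unfold Lmap
  rw [Finsupp.sum_single_index, Finsupp.sum_single_index] <;> simp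

end actRmap

end AuxLemmas

/-- `R_{S,B} : (M_S B) ⋊ G → M_{|S|}(B ⋊ G)` is an
isomorphism of (`ℓ`-)algebras: it is bijective, additive, `ℓ`-linear, and
multiplicative. -/
theorem stmt2 {ℓ G S B : Type} [CommRing ℓ] [Group G] [MulAction G S]
    [DecidableEq S] [NonUnitalNonAssocSemiring B] [Module ℓ B]
    [DistribMulAction G B]
    (hsm : ∀ (g : G) (a b : B), g • (a * b) = (g • a) * (g • b)) :
    Function.Bijective (Rmap (G := G) (S := S) (B := B)) ∧
    (∀ (a b : G →₀ ((S × S) →₀ B)), Rmap (crossedMul (A := (S × S) →₀ B) (matMul (R := B) (· * ·)) matAct a b) =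
        matMul (crossedMul (A := B) (· * ·) (fun g x => g • x)) (Rmap a) (Rmap b)) ∧
    (∀ (a b : G →₀ ((S × S) →₀ B)), Rmap (a + b) = Rmap a + Rmap b) ∧
    (∀ (c : ℓ) (a : G →₀ ((S × S) →₀ B)), Rmap (c • a) = c • Rmap a) := by
  have hLR : ∀ x : G →₀ ((S × S) →₀ B), Lmap (Rmap x) = x :=
    ext_dsingle (fun x => Lmap (Rmap x)) id
      (by simp [Rmap_zero, Lmap_zero]) rfl
      (fun x y => by simp [Rmap_add, Lmap_add]) (fun _ _ => rfl)
      (by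
        rintro g ⟨s, t⟩ b
        dsimp only [id]
        rw [Rmap_single, Lmap_single]
        simp)
  have hRL : ∀ y : (S × S) →₀ (G →₀ B), Rmap (Lmap y) = y :=
    ext_dsingle (fun y => Rmap (Lmap y)) id
      (by simp [Rmap_zero, Lmap_zero]) rfl
      (fun x y => by simp [Rmap_add, Lmap_add]) (fun _ _ => rfl)
      (by
        rintro ⟨s, t⟩ g b
        dsimp only [id]
        rw [Lmap_single, Rmap_single]
        simp)
  refine ⟨⟨Function.LeftInverse.injective hLR, Function.RightInverse.surjective hRL⟩,
    ?_, Rmap_add, fun c a => Rmap_smul c a⟩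
  -- multiplicativity
  have hmm0 : ∀ y : (S × S) →₀ B, matMul (R := B) (· * ·) 0 y = 0 :=
    matMul_zero_left _
  have hmm0' : ∀ x : (S × S) →₀ B, matMul (R := B) (· * ·) x 0 = 0 :=
    matMul_zero_right _
  have hmma : ∀ x x' y : (S × S) →₀ B,
      matMul (R := B) (· * ·) (x + x') y = matMul (· * ·) x y + matMul (· * ·) x' y :=
    matMul_add_left _ (fun y => zero_mul y) (fun x x' y => add_mul x x' y)
  have hmma' : ∀ x y y' : (S × S) →₀ B,
      matMul (R := B) (· * ·) x (y + y') = matMul (· * ·) x y + matMul (· * ·) x y' :=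
    matMul_add_right _ (fun x => mul_zero x) (fun x y y' => mul_add x y y')
  have hcm0 : ∀ y : G →₀ B, crossedMul (A := B) (· * ·) (fun g x => g • x) 0 y = 0 :=
    crossedMul_zero_left _ _
  have hcm0' : ∀ x : G →₀ B, crossedMul (A := B) (· * ·) (fun g x => g • x) x 0 = 0 :=
    crossedMul_zero_right _ _
  have hcma : ∀ x x' y : G →₀ B,
      crossedMul (A := B) (· * ·) (fun g x => g • x) (x + x') y =
        crossedMul (· * ·) (fun g x => g • x) x y +
          crossedMul (· * ·) (fun g x => g • x) x' y :=
    crossedMul_add_left _ _ (fun y => zero_mul y) (fun x x' y => add_mul x x' y)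
  have hcma' : ∀ x y y' : G →₀ B,
      crossedMul (A := B) (· * ·) (fun g x => g • x) x (y + y') =
        crossedMul (· * ·) (fun g x => g • x) x y +
          crossedMul (· * ·) (fun g x => g • x) x y' :=
    crossedMul_add_right _ _ (fun x => mul_zero x) (fun g => smul_zero g)
      (fun x y y' => mul_add x y y') (fun g y y' => smul_add g y y')
  intro a b
  refine ext_dsingle
    (fun a => Rmap (crossedMul (A := (S × S) →₀ B) (matMul (R := B) (· * ·)) matAct a b))
    (fun a => matMul (crossedMul (A := B) (· * ·) (fun g x => g • x)) (Rmap a) (Rmap b))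
    (by simp [crossedMul_zero_left, Rmap_zero])
    (by simp [Rmap_zero, matMul_zero_left])
    (fun x y => by
      rw [crossedMul_add_left _ _ hmm0 hmma, Rmap_add])
    (fun x y => by rw [Rmap_add, matMul_add_left _ hcm0 hcma]) ?_ a
  rintro g ⟨s, t⟩ x
  refine ext_dsingle
    (fun b => Rmap (crossedMul (A := (S × S) →₀ B) (matMul (R := B) (· * ·)) matAct
      (Finsupp.single g (Finsupp.single (s, t) x)) b))
    (fun b => matMul (crossedMul (A := B) (· * ·) (fun g x => g • x))
      (Rmap (Finsupp.single g (Finsupp.single (s, t) x))) (Rmap b))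
    (by simp [crossedMul_zero_right, Rmap_zero, matMul_zero_right])
    (by simp [Rmap_zero, matMul_zero_right])
    (fun x y => by
      rw [crossedMul_add_right _ _ hmm0' matAct_zero hmma' matAct_add, Rmap_add])
    (fun x y => by rw [Rmap_add, matMul_add_right _ hcm0' hcma']) ?_ b
  rintro g' ⟨s', t'⟩ y
  rw [crossedMul_single_single _ _ (matMul_zero_left _) (matMul_zero_right _)
    matAct_zero, matAct_single,
    matMul_single_single _ (fun y => zero_mul y) (fun x => mul_zero x),
    Rmap_single, Rmap_single,
    matMul_single_single _ hcm0 hcm0',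
    crossedMul_single_single _ _ (fun y => zero_mul y) (fun x => mul_zero x)
      (fun g => smul_zero g)]
  simp only [inv_smul_eq_iff]
  split_ifs with h
  · rw [Rmap_single]
    congr 1
    rw [Prod.mk.injEq]
    refine ⟨rfl, ?_⟩
    rw [mul_inv_rev, mul_smul, inv_smul_smul]
  · simp [Rmap_zero]
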